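/- arXiv:1709.03846 — 4 statements merged into one kernel-verified Lean document; each statement's English description precedes it below -/
import Mathlib

section
/- If M is a matching in a finite graph G and P is an M-augmenting path, then the symmetric difference M Δ E(P) is a matching of G with cardinality |M| + 1. -/
/-- `M` is a matching of the simple graph `G`: a set of edges of `G`,
no two of which share a vertex. -/
def IsMatching {V : Type*} (G : SimpleGraph V) [Fintype V] [DecidableEq V]
    [DecidableRel G.Adj] (M : Finset (Sym2 V)) : Prop :=
  M ⊆ G.edgeFinset ∧ ∀ e ∈ M, ∀ f ∈ M, e ≠ f → ∀ v : V, v ∈ e → v ∉ f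

/-- A vertex is unmatched by `M` if it is an endpoint of no edge of `M`. -/
def Unmatched {V : Type*} (M : Finset (Sym2 V)) (v : V) : Prop :=
  ∀ e ∈ M, v ∉ e

/-- The list of edges traversed by a list of vertices. -/
def pathEdges {V : Type*} (p : List V) : List (Sym2 V) :=
  List.zipWith (fun a b => s(a, b)) p p.tail

/-- `p` is a (vertex list of a) path in `G`: distinct vertices, consecutive ones adjacent. -/
def IsPathList {V : Type*} (G : SimpleGraph V) (p : List V) : Prop :=
  p.Nodup ∧ p.Chain' G.Adj

/-- The edges along `p` alternate between membership and non-membership in `M`. -/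
def AlternatingList {V : Type*} [DecidableEq V] (M : Finset (Sym2 V)) (p : List V) : Prop :=
  ∀ i : ℕ, (h : i + 1 < (pathEdges p).length) →
    ((pathEdges p)[i]'(Nat.lt_of_succ_lt h) ∈ M ↔ (pathEdges p)[i + 1]'h ∉ M)

/-- An `M`-augmenting path in `G`: a path whose edges alternate between `E \ M` and `M`
and whose two endpoint vertices are unmatched by `M`. -/
def IsAugmentingPath {V : Type*} (G : SimpleGraph V) [Fintype V] [DecidableEq V]
    (M : Finset (Sym2 V)) (p : List V) : Prop :=
  IsPathList G p ∧ 2 ≤ p.length ∧ AlternatingList M p ∧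
    (∃ u, p.head? = some u ∧ Unmatched M u) ∧
    (∃ w, p.getLast? = some w ∧ Unmatched M w)

lemma pathEdges_length {V : Type*} (p : List V) : (pathEdges p).length = p.length - 1 := by
  simp [pathEdges]

lemma pathEdges_get {V : Type*} (p : List V) (i : ℕ) (h : i < (pathEdges p).length) :
    (pathEdges p)[i] = s(p[i]'(by simp [pathEdges] at h; omega),
      p[i+1]'(by simp [pathEdges] at h; omega)) := by
  simp [pathEdges, List.getElem_zipWith, List.getElem_tail]

lemma evens_card (m : ℕ) : (((Finset.range m).filter (fun i => i % 2 = 0)).card = (m+1)/2)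
    ∧ (((Finset.range m).filter (fun i => i % 2 = 1)).card = m/2) := by
  induction m with
  | zero => simp
  | succ m ih =>
    obtain ⟨ih0, ih1⟩ := ih
    rw [Finset.range_add_one, Finset.filter_insert, Finset.filter_insert]
    rcases Nat.mod_two_eq_zero_or_one m with h | h
    · rw [if_pos h, if_neg (by omega), Finset.card_insert_of_notMem (by simp)]
      constructor <;> omega
    · rw [if_neg (by omega), if_pos h, Finset.card_insert_of_notMem (by simp)]
      constructor <;> omega

lemma getElem_congr' {α : Type*} {l : List α} {i j : ℕ} (h : i = j) (hi : i < l.length) :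
    l[i]'hi = l[j]'(h ▸ hi) := by subst h; rfl

/-- If `M` is a matching in a finite graph `G` and `P` is an `M`-augmenting path, then the
symmetric difference `M Δ E(P)` is a matching of `G` of cardinality `|M| + 1`. -/
theorem augment_symmDiff {V : Type*} [Fintype V] [DecidableEq V] (G : SimpleGraph V)
    [DecidableRel G.Adj] (M : Finset (Sym2 V)) (p : List V)
    (hM : IsMatching G M) (hp : IsAugmentingPath G M p) :
    IsMatching G (symmDiff M (pathEdges p).toFinset) ∧
      (symmDiff M (pathEdges p).toFinset).card = M.card + 1 := by
  obtain ⟨⟨hnd, hch⟩, hlen, halt, ⟨u, hu, hum⟩, ⟨w, hw, hwm⟩⟩ := hp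
  set n := p.length with hn
  have hn2 : 2 ≤ n := hlen
  have hpne : p ≠ [] := by intro h; simp [h] at hu
  have hm : (pathEdges p).length = n - 1 := pathEdges_length p
  have hu0 : p[0]'(by omega) = u := by
    have := List.head?_eq_getElem? (l := p)
    rw [hu, List.getElem?_eq_getElem (by omega)] at this
    exact (Option.some_injective _ this).symm
  have hwlast : p[n-1]'(by omega) = w := by
    have := List.getLast?_eq_getElem? (l := p)
    rw [hw, List.getElem?_eq_getElem (by omega)] at this
    exact (Option.some_injective _ this).symm
  -- injectivity of vertices
  have hinj : ∀ i j (hi : i < n) (hj : j < n), p[i] = p[j] → i = j := by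
    intro i j hi hj hij
    exact (List.Nodup.getElem_inj_iff hnd).mp hij
  -- parity of edges
  have parity : ∀ i, (h : i < (pathEdges p).length) → ((pathEdges p)[i] ∈ M ↔ i % 2 = 1) := by
    intro i
    induction i with
    | zero =>
      intro h
      have h0 : (pathEdges p)[0]'h ∉ M := by
        intro hmem
        apply hum _ hmem
        rw [pathEdges_get, ← hu0]
        exact Sym2.mem_mk_left _ _
      simp [h0]
    | succ i ih =>
      intro h
      have h1 := halt i h
      rw [ih (Nat.lt_of_succ_lt h)] at h1
      by_cases he : (pathEdges p)[i+1]'h ∈ M <;> simp [he] at h1 ⊢ <;> omega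
  -- last edge not in M, so n is even
  have hlast : (pathEdges p)[n-2]'(by omega) ∉ M := by
    intro hmem
    apply hwm _ hmem
    rw [pathEdges_get, Sym2.mem_iff]
    right
    rw [← hwlast]
    exact (getElem_congr' (show n - 1 = n - 2 + 1 by omega) (by omega))
  have hneven : n % 2 = 0 := by
    have h2 : ¬ ((n-2) % 2 = 1) := fun hh => hlast ((parity (n-2) (by omega)).mpr hh)
    omega
  -- membership in edge set of path
  have hmemS : ∀ e, e ∈ (pathEdges p).toFinset ↔
      ∃ i, ∃ h : i < (pathEdges p).length, e = (pathEdges p)[i] := by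
    intro e
    rw [List.mem_toFinset, List.mem_iff_getElem]
    constructor
    · rintro ⟨i, h, rfl⟩; exact ⟨i, h, rfl⟩
    · rintro ⟨i, h, rfl⟩; exact ⟨i, h, rfl⟩
  -- key: an M-edge through a path vertex is a path edge
  have keyA : ∀ e ∈ M, ∀ j, ∀ hj : j < n, p[j] ∈ e → e ∈ (pathEdges p).toFinset := by
    intro e he j hj hv
    have hj0 : j ≠ 0 := by rintro rfl; exact hum e he (hu0 ▸ hv)
    have hjl : j ≠ n - 1 := by rintro rfl; exact hwm e he (hwlast ▸ hv)
    rcases Nat.mod_two_eq_zero_or_one j with hpar | hpar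
    · have hilt : j - 1 < (pathEdges p).length := by omega
      have hE : (pathEdges p)[j-1]'hilt ∈ M := (parity _ hilt).mpr (by omega)
      have hvE : p[j]'hj ∈ (pathEdges p)[j-1]'hilt := by
        rw [pathEdges_get, Sym2.mem_iff]
        right
        exact (getElem_congr' (show j = j - 1 + 1 by omega) hj)
      have heq : e = (pathEdges p)[j-1]'hilt := by
        by_contra hne
        exact hM.2 e he _ hE hne _ hv hvE
      rw [hmemS]; exact ⟨j-1, hilt, heq⟩
    · have hilt : j < (pathEdges p).length := by omega
      have hE : (pathEdges p)[j]'hilt ∈ M := (parity _ hilt).mpr hpar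
      have hvE : p[j]'hj ∈ (pathEdges p)[j]'hilt := by
        rw [pathEdges_get]
        exact Sym2.mem_mk_left _ _
      have heq : e = (pathEdges p)[j]'hilt := by
        by_contra hne
        exact hM.2 e he _ hE hne _ hv hvE
      rw [hmemS]; exact ⟨j, hilt, heq⟩
  -- cross lemma
  have cross : ∀ e ∈ M, e ∉ (pathEdges p).toFinset → ∀ v, v ∈ e →
      ∀ i, ∀ hi : i < (pathEdges p).length, v ∉ (pathEdges p)[i] := by
    intro e he heS v hv i hi hvi
    rw [pathEdges_get] at hvi
    rw [Sym2.mem_iff] at hvi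
    rcases hvi with rfl | rfl
    · exact heS (keyA e he i (by omega) hv)
    · exact heS (keyA e he (i+1) (by omega) hv)
  -- edge injectivity
  have hedgeinj : ∀ i j (hi : i < (pathEdges p).length) (hj : j < (pathEdges p).length),
      (pathEdges p)[i] = (pathEdges p)[j] → i = j := by
    intro i j hi hj hij
    rw [pathEdges_get, pathEdges_get, Sym2.eq_iff] at hij
    rcases hij with ⟨h1, _⟩ | ⟨h1, h2⟩
    · exact hinj _ _ _ _ h1
    · have e1 := hinj _ _ (by omega) (by omega) h1
      have e2 := hinj _ _ (by omega) (by omega) h2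
      omega
  have hSnd : (pathEdges p).Nodup := by
    rw [List.nodup_iff_injective_getElem]
    rintro ⟨i, hi⟩ ⟨j, hj⟩ hij
    exact Fin.ext (hedgeinj i j hi hj hij)
  constructor
  · constructor
    · intro e he
      rw [Finset.mem_symmDiff] at he
      rcases he with ⟨he, -⟩ | ⟨he, -⟩
      · exact hM.1 he
      · rw [hmemS] at he
        obtain ⟨i, hi, rfl⟩ := he
        rw [pathEdges_get, SimpleGraph.mem_edgeFinset, SimpleGraph.mem_edgeSet]
        have := List.isChain_iff_getElem.mp hch i (by omega)
        simpa using this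
    · intro e he f hf hef v hv hvf
      rw [Finset.mem_symmDiff] at he hf
      rcases he with ⟨he, heS⟩ | ⟨heS, he⟩ <;> rcases hf with ⟨hf, hfS⟩ | ⟨hfS, hf⟩
      · exact hM.2 e he f hf hef v hv hvf
      · rw [hmemS] at hfS
        obtain ⟨j, hj, rfl⟩ := hfS
        exact cross e he heS v hv j hj hvf
      · rw [hmemS] at heS
        obtain ⟨i, hi, rfl⟩ := heS
        exact cross f hf hfS v hvf i hi hv
      · rw [hmemS] at heS hfS
        obtain ⟨i, hi, rfl⟩ := heS
        obtain ⟨j, hj, rfl⟩ := hfS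
        have hip : i % 2 = 0 := by
          rcases Nat.mod_two_eq_zero_or_one i with h' | h'
          · exact h'
          · exact absurd ((parity i hi).mpr h') he
        have hjp : j % 2 = 0 := by
          rcases Nat.mod_two_eq_zero_or_one j with h' | h'
          · exact h'
          · exact absurd ((parity j hj).mpr h') hf
        have hij : i ≠ j := by
          rintro rfl; exact hef rfl
        rw [pathEdges_get, Sym2.mem_iff] at hv hvf
        rcases hv with rfl | rfl <;> rcases hvf with h' | h' <;>
          [skip; skip; skip; skip] <;>
          (first
            | (have := hinj _ _ (by omega) (by omega) h'; omega))
  · -- cardinality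
    have hScard : (pathEdges p).toFinset.card = n - 1 := by
      rw [List.toFinset_card_of_nodup hSnd, hm]
    have hcard1 : ((Finset.range (n-1)).filter (fun i => i % 2 = 1)).card
        = ((pathEdges p).toFinset.filter (fun e => e ∈ M)).card := by
      apply Finset.card_bij (fun a ha => (pathEdges p)[a]'(by
        simp only [Finset.mem_filter, Finset.mem_range] at ha; omega))
      · intro a ha
        simp only [Finset.mem_filter, Finset.mem_range] at ha
        refine Finset.mem_filter.mpr ⟨List.mem_toFinset.mpr (List.getElem_mem _), ?_⟩
        exact (parity _ _).mpr ha.2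
      · intro a ha b hb hab
        simp only [Finset.mem_filter, Finset.mem_range] at ha hb
        exact hedgeinj _ _ (by omega) (by omega) hab
      · intro e heM
        rw [Finset.mem_filter] at heM
        obtain ⟨i, hi, rfl⟩ := (hmemS e).mp heM.1
        refine ⟨i, ?_, rfl⟩
        simp only [Finset.mem_filter, Finset.mem_range]
        exact ⟨by omega, (parity i hi).mp heM.2⟩
    have hcard0 : ((Finset.range (n-1)).filter (fun i => i % 2 = 0)).card
        = ((pathEdges p).toFinset.filter (fun e => e ∉ M)).card := by
      apply Finset.card_bij (fun a ha => (pathEdges p)[a]'(by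
        simp only [Finset.mem_filter, Finset.mem_range] at ha; omega))
      · intro a ha
        simp only [Finset.mem_filter, Finset.mem_range] at ha
        refine Finset.mem_filter.mpr ⟨List.mem_toFinset.mpr (List.getElem_mem _), ?_⟩
        intro hmem
        have := (parity a (by omega)).mp hmem
        omega
      · intro a ha b hb hab
        simp only [Finset.mem_filter, Finset.mem_range] at ha hb
        exact hedgeinj _ _ (by omega) (by omega) hab
      · intro e heM
        rw [Finset.mem_filter] at heM
        obtain ⟨i, hi, rfl⟩ := (hmemS e).mp heM.1
        refine ⟨i, ?_, rfl⟩
        simp only [Finset.mem_filter, Finset.mem_range]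
        refine ⟨by omega, ?_⟩
        rcases Nat.mod_two_eq_zero_or_one i with h' | h'
        · exact h'
        · exact absurd ((parity i hi).mpr h') heM.2
    have hev := evens_card (n-1)
    have hsd : symmDiff M (pathEdges p).toFinset
        = (M \ (pathEdges p).toFinset) ∪ ((pathEdges p).toFinset \ M) := by
      rw [symmDiff_def, Finset.sup_eq_union]
    have hdisj : Disjoint (M \ (pathEdges p).toFinset) ((pathEdges p).toFinset \ M) :=
      disjoint_sdiff_sdiff
    rw [hsd, Finset.card_union_of_disjoint hdisj]
    have h1 := Finset.card_inter_add_card_sdiff M (pathEdges p).toFinset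
    have h2 : M ∩ (pathEdges p).toFinset
        = (pathEdges p).toFinset.filter (fun e => e ∈ M) := by
      rw [Finset.filter_mem_eq_inter, Finset.inter_comm]
    have h3 : (pathEdges p).toFinset \ M
        = (pathEdges p).toFinset.filter (fun e => e ∉ M) :=
      Finset.sdiff_eq_filter _ _
    rw [h3]
    rw [h2] at h1
    omega
end

section
/- If M₁ and M₂ are two maximum matchings of a finite graph G and v is a vertex unmatched by M₁ but matched by M₂, then there exists a vertex w unmatched by M₂ and an M₁-alternating path in G from v to w. -/
set_option linter.unusedSectionVars false

section Aux
variable {V : Type*} [Fintype V] [DecidableEq V] (G : SimpleGraph V) [DecidableRel G.Adj]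
variable {M : Finset (Sym2 V)}

lemma IsMatching.unique (hM : IsMatching G M) {e f : Sym2 V} {x : V}
    (he : e ∈ M) (hf : f ∈ M) (hxe : x ∈ e) (hxf : x ∈ f) : e = f := by
  by_contra hne
  exact hM.2 e he f hf hne x hxe hxf

lemma IsMatching.adj (hM : IsMatching G M) {x y : V} (h : s(x,y) ∈ M) : G.Adj x y := by
  have := hM.1 h
  rwa [SimpleGraph.mem_edgeFinset, SimpleGraph.mem_edgeSet] at this

noncomputable def pt (M : Finset (Sym2 V)) (x : V) : Option V :=
  if h : ∃ e ∈ M, x ∈ e then some (Sym2.Mem.other h.choose_spec.2) else none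

lemma pt_eq_none_iff {x : V} : pt M x = none ↔ Unmatched M x := by
  unfold pt
  split
  · rename_i h
    simp only [reduceCtorEq, false_iff]
    intro hU
    exact hU h.choose h.choose_spec.1 h.choose_spec.2
  · rename_i h
    push_neg at h
    simpa [Unmatched] using h

lemma mem_of_pt_eq_some {x y : V} (h : pt M x = some y) : s(x,y) ∈ M := by
  unfold pt at h
  split at h
  · rename_i hex
    have h2 := Sym2.other_spec hex.choose_spec.2
    simp only [Option.some.injEq] at h
    rw [h] at h2
    rw [h2]
    exact hex.choose_spec.1
  · simp at h

lemma pt_eq_some_of_mem (hM : IsMatching G M) {x y : V} (h : s(x,y) ∈ M) :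
    pt M x = some y := by
  have hex : ∃ e ∈ M, x ∈ e := ⟨s(x,y), h, by simp⟩
  unfold pt
  rw [dif_pos hex]
  have h2 := Sym2.other_spec hex.choose_spec.2
  have he : hex.choose = s(x,y) :=
    hM.unique G hex.choose_spec.1 h hex.choose_spec.2 (by simp)
  have h3 := h2.trans he
  congr 1
  rwa [Sym2.congr_right] at h3

lemma pt_ne {x y : V} (hM : IsMatching G M) (h : pt M x = some y) : x ≠ y :=
  (hM.adj G (mem_of_pt_eq_some h)).ne

lemma pt_symm (hM : IsMatching G M) {x y : V} (h : pt M x = some y) : pt M y = some x := by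
  apply pt_eq_some_of_mem G hM
  rw [Sym2.eq_swap]
  exact mem_of_pt_eq_some h

end Aux

section Walk
variable {V : Type*} [Fintype V] [DecidableEq V] (G : SimpleGraph V) [DecidableRel G.Adj]

noncomputable def walkF (M₁ M₂ : Finset (Sym2 V)) (v : V) : ℕ → Option V
  | 0 => some v
  | n+1 => (walkF M₁ M₂ v n).bind fun x => if n % 2 = 0 then pt M₂ x else pt M₁ x

variable {M₁ M₂ : Finset (Sym2 V)} {v : V}

lemma walkF_succ (n : ℕ) : walkF M₁ M₂ v (n+1) =
    (walkF M₁ M₂ v n).bind (fun x => if n % 2 = 0 then pt M₂ x else pt M₁ x) := rfl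

lemma walkF_succ_elim {n : ℕ} {y : V} (h : walkF M₁ M₂ v (n+1) = some y) :
    ∃ x, walkF M₁ M₂ v n = some x ∧
      (if n % 2 = 0 then pt M₂ x else pt M₁ x) = some y := by
  rw [walkF_succ] at h
  cases hx : walkF M₁ M₂ v n with
  | none => rw [hx] at h; simp at h
  | some x => rw [hx] at h; exact ⟨x, rfl, h⟩

lemma walkF_isSome_of_le {m n : ℕ} (h : (walkF M₁ M₂ v n).isSome) (hm : m ≤ n) :
    (walkF M₁ M₂ v m).isSome := by
  induction n with
  | zero => simpa [Nat.le_zero.mp hm]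
  | succ n IH =>
    rcases Nat.lt_succ_iff_lt_or_eq.mp (Nat.lt_succ_of_le hm) with h' | h'
    · obtain ⟨y, hy⟩ := Option.isSome_iff_exists.mp h
      obtain ⟨x, hx, -⟩ := walkF_succ_elim hy
      exact IH (by simp [hx]) (Nat.lt_succ_iff.mp h')
    · rwa [h']

lemma walkF_inj (hM₁ : IsMatching G M₁) (hM₂ : IsMatching G M₂) (hv₁ : Unmatched M₁ v) :
    ∀ j i, i < j → ∀ x, walkF M₁ M₂ v i = some x → walkF M₁ M₂ v j = some x → False := by
  intro j
  induction j using Nat.strong_induction_on with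
  | _ j IH =>
  intro i hij x hi hj
  obtain ⟨k, rfl⟩ : ∃ k, j = k + 1 := ⟨j - 1, by omega⟩
  obtain ⟨y, hky, hpy⟩ := walkF_succ_elim hj
  match i, hij, hi with
  | 0, hij, hi =>
    have hxv : x = v := by simpa [walkF] using hi.symm
    rw [hxv] at hpy
    by_cases hk : k % 2 = 0
    · rw [if_pos hk] at hpy
      have hsym : pt M₂ v = some y := pt_symm G hM₂ hpy
      rcases Nat.eq_zero_or_pos k with rfl | hk1
      · have hyv : y = v := by simpa [walkF] using hky.symm
        exact pt_ne G hM₂ hpy hyv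
      · have h1 : walkF M₁ M₂ v 1 = some y := by
          rw [walkF_succ]
          simp only [show walkF M₁ M₂ v 0 = some v from rfl, Option.bind_some]
          simpa using hsym
        have hk2 : 2 ≤ k := by omega
        exact IH k (by omega) 1 (by omega) y h1 hky
    · rw [if_neg hk] at hpy
      exact hv₁ _ (mem_of_pt_eq_some hpy) (by simp)
  | (i'+1), hij, hi =>
    obtain ⟨z, hz, hpz⟩ := walkF_succ_elim hi
    have hi'k : i' < k := by omega
    by_cases hk : k % 2 = 0 <;> by_cases hi2 : i' % 2 = 0
    · -- both even: same matching M₂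
      rw [if_pos hk] at hpy; rw [if_pos hi2] at hpz
      have h1 : pt M₂ x = some y := pt_symm G hM₂ hpy
      have h2 : pt M₂ x = some z := pt_symm G hM₂ hpz
      have hzy : z = y := Option.some.inj (h2.symm.trans h1)
      exact IH k (by omega) i' hi'k y (hzy ▸ hz) hky
    · -- k even, i' odd : i'+1 even
      rw [if_pos hk] at hpy
      rcases eq_or_lt_of_le (show i'+1 ≤ k by omega) with heq | hlt
      · have hyx : y = x := Option.some.inj ((heq ▸ hky).symm.trans hi).symm.symm
        rw [hyx] at hpy
        exact pt_ne G hM₂ (pt_symm G hM₂ hpy) rfl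
      · have hlt2 : i' + 2 < k := by omega
        have hsome : (walkF M₁ M₂ v (i'+2)).isSome :=
          walkF_isSome_of_le (n := k) (by simp [hky]) (by omega)
        obtain ⟨u, hu⟩ := Option.isSome_iff_exists.mp hsome
        obtain ⟨x', hx', hpu⟩ := walkF_succ_elim hu
        have hxx : x' = x := Option.some.inj (hx'.symm.trans hi)
        rw [hxx] at hpu
        rw [if_pos (by omega : (i'+1) % 2 = 0)] at hpu
        have h1 : pt M₂ x = some y := pt_symm G hM₂ hpy
        have huy : u = y := Option.some.inj (hpu.symm.trans h1)
        rw [huy] at hu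
        exact IH k (by omega) (i'+2) hlt2 y hu hky
    · -- k odd, i' even : i'+1 odd
      rw [if_neg hk] at hpy
      rcases eq_or_lt_of_le (show i'+1 ≤ k by omega) with heq | hlt
      · have hyx : y = x := Option.some.inj ((heq ▸ hky).symm.trans hi).symm.symm
        rw [hyx] at hpy
        exact pt_ne G hM₁ (pt_symm G hM₁ hpy) rfl
      · have hlt2 : i' + 2 < k := by omega
        have hsome : (walkF M₁ M₂ v (i'+2)).isSome :=
          walkF_isSome_of_le (n := k) (by simp [hky]) (by omega)
        obtain ⟨u, hu⟩ := Option.isSome_iff_exists.mp hsome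
        obtain ⟨x', hx', hpu⟩ := walkF_succ_elim hu
        have hxx : x' = x := Option.some.inj (hx'.symm.trans hi)
        rw [hxx] at hpu
        rw [if_neg (by omega : ¬ (i'+1) % 2 = 0)] at hpu
        have h1 : pt M₁ x = some y := pt_symm G hM₁ hpy
        have huy : u = y := Option.some.inj (hpu.symm.trans h1)
        rw [huy] at hu
        exact IH k (by omega) (i'+2) hlt2 y hu hky
    · -- both odd: same matching M₁
      rw [if_neg hk] at hpy; rw [if_neg hi2] at hpz
      have h1 : pt M₁ x = some y := pt_symm G hM₁ hpy
      have h2 : pt M₁ x = some z := pt_symm G hM₁ hpz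
      have hzy : z = y := Option.some.inj (h2.symm.trans h1)
      exact IH k (by omega) i' hi'k y (hzy ▸ hz) hky

end Walk

section Walk2
variable {V : Type*} [Fintype V] [DecidableEq V] (G : SimpleGraph V) [DecidableRel G.Adj]
variable {M₁ M₂ : Finset (Sym2 V)} {v : V}

lemma walkF_exists_none (hM₁ : IsMatching G M₁) (hM₂ : IsMatching G M₂)
    (hv₁ : Unmatched M₁ v) : ∃ n, walkF M₁ M₂ v n = none := by
  by_contra h
  push_neg at h
  have hs : ∀ n : ℕ, (walkF M₁ M₂ v n).isSome :=
    fun n => Option.ne_none_iff_isSome.mp (h n)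
  have inj : Function.Injective
      (fun i : Fin (Fintype.card V + 1) => (walkF M₁ M₂ v i).get (hs i)) := by
    intro i j hij
    by_contra hne
    have hxi : walkF M₁ M₂ v i = some ((walkF M₁ M₂ v i).get (hs i)) :=
      (Option.some_get (hs i)).symm
    have hxj : walkF M₁ M₂ v j = some ((walkF M₁ M₂ v j).get (hs j)) :=
      (Option.some_get (hs j)).symm
    simp only [] at hij
    rw [hij] at hxi
    rcases lt_trichotomy (i : ℕ) (j : ℕ) with hlt | heq | hlt
    · exact walkF_inj G hM₁ hM₂ hv₁ j i hlt _ hxi hxj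
    · exact hne (Fin.ext heq)
    · exact walkF_inj G hM₁ hM₂ hv₁ i j hlt _ hxj hxi
  have := Fintype.card_le_of_injective _ inj
  simp at this

lemma count_parity (n : ℕ) :
    ((Finset.range n).filter (fun k => k % 2 = 0)).card = (n+1)/2 ∧
    ((Finset.range n).filter (fun k => k % 2 = 1)).card = n/2 := by
  induction n with
  | zero => simp
  | succ n IH =>
    rw [Finset.range_add_one, Finset.filter_insert, Finset.filter_insert]
    have hn : n ∉ Finset.range n := Finset.notMem_range_self
    by_cases h : n % 2 = 0
    · rw [if_pos h, if_neg (by omega)]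
      rw [Finset.card_insert_of_notMem (fun hc => hn (Finset.mem_filter.mp hc).1)]
      exact ⟨by rw [IH.1]; omega, by rw [IH.2]; omega⟩
    · rw [if_neg h, if_pos (by omega)]
      rw [Finset.card_insert_of_notMem (fun hc => hn (Finset.mem_filter.mp hc).1)]
      exact ⟨by rw [IH.1]; omega, by rw [IH.2]; omega⟩

end Walk2

section Augment
variable {V : Type*} [Fintype V] [DecidableEq V] (G : SimpleGraph V) [DecidableRel G.Adj]
variable {M₁ : Finset (Sym2 V)}

lemma augment (hM₁ : IsMatching G M₁) (g : ℕ → V) (N : ℕ) (hN2 : 2 ≤ N) (hNe : N % 2 = 0)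
    (hginj : ∀ i < N, ∀ j < N, g i = g j → i = j)
    (hadj : ∀ k, k + 1 < N → G.Adj (g k) (g (k+1)))
    (hodd : ∀ k, k + 1 < N → k % 2 = 1 → s(g k, g (k+1)) ∈ M₁)
    (heven : ∀ k, k + 1 < N → k % 2 = 0 → s(g k, g (k+1)) ∉ M₁)
    (h0 : Unmatched M₁ (g 0)) (hlast : Unmatched M₁ (g (N-1))) :
    ∃ M' : Finset (Sym2 V), IsMatching G M' ∧ M₁.card < M'.card := by
  set e : ℕ → Sym2 V := fun k => s(g k, g (k+1)) with he
  set Podd := ((Finset.range (N-1)).filter (fun k => k % 2 = 1)).image e with hPodd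
  set Peven := ((Finset.range (N-1)).filter (fun k => k % 2 = 0)).image e with hPeven
  have einj : ∀ i < N - 1, ∀ j < N - 1, e i = e j → i = j := by
    intro i hi j hj hij
    rw [he] at hij
    simp only [Sym2.eq_iff] at hij
    rcases hij with ⟨h1, h2⟩ | ⟨h1, h2⟩
    · exact hginj i (by omega) j (by omega) h1
    · have hx := hginj i (by omega) (j+1) (by omega) h1
      have hy := hginj (i+1) (by omega) j (by omega) h2
      omega
  have hPoddcard : Podd.card = (N-1)/2 := by
    rw [hPodd, Finset.card_image_of_injOn, (count_parity (N-1)).2]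
    intro i hi j hj hij
    simp only [Finset.mem_coe, Finset.mem_filter, Finset.mem_range] at hi hj
    exact einj i hi.1 j hj.1 hij
  have hPevencard : Peven.card = N/2 := by
    rw [hPeven, Finset.card_image_of_injOn, (count_parity (N-1)).1]
    · omega
    intro i hi j hj hij
    simp only [Finset.mem_coe, Finset.mem_filter, Finset.mem_range] at hi hj
    exact einj i hi.1 j hj.1 hij
  have hPoddsub : Podd ⊆ M₁ := by
    intro x hx
    rw [hPodd] at hx
    obtain ⟨k, hk, rfl⟩ := Finset.mem_image.mp hx
    obtain ⟨hk1, hk2⟩ := Finset.mem_filter.mp hk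
    rw [Finset.mem_range] at hk1
    exact hodd k (by omega) hk2
  have hPevendis : ∀ x ∈ Peven, x ∉ M₁ := by
    intro x hx
    rw [hPeven] at hx
    obtain ⟨k, hk, rfl⟩ := Finset.mem_image.mp hx
    obtain ⟨hk1, hk2⟩ := Finset.mem_filter.mp hk
    rw [Finset.mem_range] at hk1
    exact heven k (by omega) hk2
  refine ⟨(M₁ \ Podd) ∪ Peven, ⟨?_, ?_⟩, ?_⟩
  · -- subset of edges
    apply Finset.union_subset
    · exact (Finset.sdiff_subset).trans hM₁.1
    · intro x hx
      rw [hPeven] at hx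
      obtain ⟨k, hk, rfl⟩ := Finset.mem_image.mp hx
      obtain ⟨hk1, -⟩ := Finset.mem_filter.mp hk
      rw [Finset.mem_range] at hk1
      rw [SimpleGraph.mem_edgeFinset]
      exact (hadj k (by omega))
  · -- pairwise disjoint
    have key : ∀ e1 ∈ M₁ \ Podd, ∀ k, k < N - 1 → k % 2 = 0 →
        ∀ x, x ∈ e1 → x ∈ e k → False := by
      intro e1 he1 k hk hk2 x hx1 hxk
      obtain ⟨he1M, hnot⟩ := Finset.mem_sdiff.mp he1
      rw [he] at hxk
      rcases Sym2.mem_iff.mp hxk with rfl | rfl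
      · rcases Nat.eq_zero_or_pos k with rfl | hpos
        · exact h0 e1 he1M hx1
        · have hkk : 2 ≤ k := by omega
          have hm : e (k-1) ∈ M₁ := hodd (k-1) (by omega) (by omega)
          have hgk : g k ∈ e (k-1) := by
            rw [he]
            simp only [Sym2.mem_iff]
            right
            rw [show k - 1 + 1 = k from by omega]
          have heq1 := hM₁.unique G he1M hm hx1 hgk
          apply hnot
          rw [heq1, hPodd]
          exact Finset.mem_image.mpr ⟨k-1,
            Finset.mem_filter.mpr ⟨Finset.mem_range.mpr (by omega), by omega⟩, rfl⟩
      · rcases eq_or_lt_of_le (show k+1 ≤ N-1 by omega) with heq | hlt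
        · exact hlast e1 he1M (by rw [← heq]; exact hx1)
        · have hm : e (k+1) ∈ M₁ := hodd (k+1) (by omega) (by omega)
          have hgk : g (k+1) ∈ e (k+1) := by rw [he]; simp
          have heq1 := hM₁.unique G he1M hm hx1 hgk
          apply hnot
          rw [heq1, hPodd]
          exact Finset.mem_image.mpr ⟨k+1,
            Finset.mem_filter.mpr ⟨Finset.mem_range.mpr (by omega), by omega⟩, rfl⟩
    intro e1 he1 e2 he2 hne x hx1 hx2
    rcases Finset.mem_union.mp he1 with hA | hB <;> rcases Finset.mem_union.mp he2 with hC | hD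
    · exact hM₁.2 e1 (Finset.mem_sdiff.mp hA).1 e2 (Finset.mem_sdiff.mp hC).1 hne x hx1 hx2
    · obtain ⟨k, hk, rfl⟩ := Finset.mem_image.mp (hPeven ▸ hD)
      obtain ⟨hk1, hk2⟩ := Finset.mem_filter.mp hk
      rw [Finset.mem_range] at hk1
      exact key e1 hA k hk1 hk2 x hx1 hx2
    · obtain ⟨k, hk, rfl⟩ := Finset.mem_image.mp (hPeven ▸ hB)
      obtain ⟨hk1, hk2⟩ := Finset.mem_filter.mp hk
      rw [Finset.mem_range] at hk1
      exact key e2 hC k hk1 hk2 x hx2 hx1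
    · obtain ⟨k, hk, rfl⟩ := Finset.mem_image.mp (hPeven ▸ hB)
      obtain ⟨hk1, hk2⟩ := Finset.mem_filter.mp hk
      rw [Finset.mem_range] at hk1
      obtain ⟨j, hj, rfl⟩ := Finset.mem_image.mp (hPeven ▸ hD)
      obtain ⟨hj1, hj2⟩ := Finset.mem_filter.mp hj
      rw [Finset.mem_range] at hj1
      have hkj : k ≠ j := fun h => hne (by rw [h])
      rw [he] at hx1 hx2
      rcases Sym2.mem_iff.mp hx1 with rfl | rfl <;>
        rcases Sym2.mem_iff.mp hx2 with h2 | h2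
      · have := hginj k (by omega) j (by omega) h2; omega
      · have := hginj k (by omega) (j+1) (by omega) h2; omega
      · have := hginj (k+1) (by omega) j (by omega) h2; omega
      · have := hginj (k+1) (by omega) (j+1) (by omega) h2; omega
  · -- cardinality
    have hdisj : Disjoint (M₁ \ Podd) Peven := by
      rw [Finset.disjoint_right]
      intro x hx hx'
      exact hPevendis x hx (Finset.mem_sdiff.mp hx').1
    rw [Finset.card_union_of_disjoint hdisj, Finset.card_sdiff_of_subset hPoddsub,
      hPoddcard, hPevencard]
    have hle := Finset.card_le_card hPoddsub
    rw [hPoddcard] at hle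
    omega

end Augment

/-- If `M₁`, `M₂` are maximum matchings and `v` is unmatched by `M₁` but matched by `M₂`,
then some vertex `w` unmatched by `M₂` is reached from `v` by an `M₁`-alternating path. -/
theorem alternating_path_to_M₂_unmatched {V : Type*} [Fintype V] [DecidableEq V]
    (G : SimpleGraph V) [DecidableRel G.Adj] (M₁ M₂ : Finset (Sym2 V))
    (hM₁ : IsMatching G M₁) (hM₁max : ∀ M', IsMatching G M' → M'.card ≤ M₁.card)
    (hM₂ : IsMatching G M₂) (hM₂max : ∀ M', IsMatching G M' → M'.card ≤ M₂.card)
    (v : V) (hv₁ : Unmatched M₁ v) (hv₂ : ¬ Unmatched M₂ v) :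
    ∃ (w : V) (p : List V), IsPathList G p ∧ AlternatingList M₁ p ∧
      p.head? = some v ∧ p.getLast? = some w ∧ Unmatched M₂ w := by
  classical
  have hex : ∃ n, walkF M₁ M₂ v n = none := walkF_exists_none G hM₁ hM₂ hv₁
  set N := Nat.find hex with hN
  have hnone : walkF M₁ M₂ v N = none := Nat.find_spec hex
  have hsome : ∀ m < N, (walkF M₁ M₂ v m).isSome := fun m hm =>
    Option.ne_none_iff_isSome.mp (Nat.find_min hex hm)
  set g : ℕ → V := fun n => (walkF M₁ M₂ v n).getD v with hg
  have hgs : ∀ m < N, walkF M₁ M₂ v m = some (g m) := by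
    intro m hm
    obtain ⟨x, hx⟩ := Option.isSome_iff_exists.mp (hsome m hm)
    rw [hg]; simp [hx]
  have h0N : 0 < N := by
    rcases Nat.eq_zero_or_pos N with h | h
    · rw [h] at hnone; simp [walkF] at hnone
    · exact h
  have hg0 : g 0 = v := by
    have := hgs 0 h0N
    simpa [walkF] using this.symm
  have h1N : 1 < N := by
    by_contra h
    have hN1 : N = 1 := by omega
    rw [hN1, walkF_succ] at hnone
    simp only [show walkF M₁ M₂ v 0 = some v from rfl, Option.bind_some, Nat.zero_mod,
      if_pos rfl] at hnone
    exact hv₂ (pt_eq_none_iff.mp hnone)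
  have hstep : ∀ k, k + 1 < N →
      (if k % 2 = 0 then pt M₂ (g k) else pt M₁ (g k)) = some (g (k+1)) := by
    intro k hk
    obtain ⟨x, hx, hp⟩ := walkF_succ_elim (hgs (k+1) hk)
    have hxg : x = g k := (Option.some.inj ((hgs k (by omega)).symm.trans hx)).symm
    rw [hxg] at hp
    exact hp
  have hM2edge : ∀ k, k + 1 < N → k % 2 = 0 → s(g k, g (k+1)) ∈ M₂ := by
    intro k hk hp
    have := hstep k hk
    rw [if_pos hp] at this
    exact mem_of_pt_eq_some this
  have hM1edge : ∀ k, k + 1 < N → k % 2 = 1 → s(g k, g (k+1)) ∈ M₁ := by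
    intro k hk hp
    have := hstep k hk
    rw [if_neg (by omega)] at this
    exact mem_of_pt_eq_some this
  have hginj : ∀ i < N, ∀ j < N, g i = g j → i = j := by
    intro i hi j hj hij
    by_contra hne
    rcases lt_trichotomy i j with hlt | heq | hlt
    · exact walkF_inj G hM₁ hM₂ hv₁ j i hlt (g i) (hgs i hi) (hij ▸ hgs j hj)
    · exact hne heq
    · exact walkF_inj G hM₁ hM₂ hv₁ i j hlt (g j) (hgs j hj) (hij ▸ hgs i hi)
  have hadj : ∀ k, k + 1 < N → G.Adj (g k) (g (k+1)) := by
    intro k hk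
    by_cases hp : k % 2 = 0
    · exact hM₂.adj G (hM2edge k hk hp)
    · exact hM₁.adj G (hM1edge k hk (by omega))
  have heven : ∀ k, k + 1 < N → k % 2 = 0 → s(g k, g (k+1)) ∉ M₁ := by
    intro k hk hp hmem
    rcases Nat.eq_zero_or_pos k with rfl | hpos
    · exact hv₁ _ hmem (by rw [← hg0]; simp)
    · have hkk : 2 ≤ k := by omega
      have hm : s(g (k-1), g k) ∈ M₁ := by
        have := hM1edge (k-1) (by omega) (by omega)
        rwa [show k - 1 + 1 = k from by omega] at this
      have hE := hM₁.unique G hm hmem (Sym2.mem_mk_right _ _) (Sym2.mem_mk_left _ _)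
      simp only [Sym2.eq_iff] at hE
      rcases hE with ⟨h1, h2⟩ | ⟨h1, h2⟩
      · have := hginj (k-1) (by omega) k (by omega) h1; omega
      · have := hginj (k-1) (by omega) (k+1) (by omega) h1; omega
  have hodd2 : ∀ k, k + 1 < N → k % 2 = 1 → s(g k, g (k+1)) ∉ M₂ := by
    intro k hk hp hmem
    have hpos : 1 ≤ k := by omega
    have hm : s(g (k-1), g k) ∈ M₂ := by
      have := hM2edge (k-1) (by omega) (by omega)
      rwa [show k - 1 + 1 = k from by omega] at this
    have hE := hM₂.unique G hm hmem (Sym2.mem_mk_right _ _) (Sym2.mem_mk_left _ _)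
    simp only [Sym2.eq_iff] at hE
    rcases hE with ⟨h1, h2⟩ | ⟨h1, h2⟩
    · have := hginj (k-1) (by omega) k (by omega) h1; omega
    · have := hginj (k-1) (by omega) (k+1) (by omega) h1; omega
  -- the path
  set p : List V := (List.range N).map g with hp
  have hplen : p.length = N := by simp [hp]
  have hpget : ∀ (i : ℕ) (h : i < N), p[i]'(by omega) = g i := by
    intro i h
    simp [hp]
  have hpElen : (pathEdges p).length = N - 1 := by
    simp [pathEdges, hplen]
  have hpE : ∀ (k : ℕ) (h : k < N - 1), (pathEdges p)[k]'(by omega) = s(g k, g (k+1)) := by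
    intro k h
    simp only [pathEdges]
    rw [List.getElem_zipWith]
    rw [List.getElem_tail]
    rw [hpget k (by omega), hpget (k+1) (by omega)]
  have hpath : IsPathList G p := by
    constructor
    · exact List.Nodup.map_on
        (fun i hi j hj hij =>
          hginj i (List.mem_range.mp hi) j (List.mem_range.mp hj) hij)
        (List.nodup_range (n := N))
    · change p.IsChain G.Adj
      rw [List.isChain_iff_getElem]
      intro i hilt
      rw [hplen] at hilt
      have h1 : p.get ⟨i, by omega⟩ = g i := hpget i (by omega)
      have h2 : p.get ⟨i+1, by omega⟩ = g (i+1) := hpget (i+1) (by omega)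
      rw [hpget i (by rw [hplen] at *; omega), hpget (i+1) (by rw [hplen] at *; omega)]
      exact hadj i (by omega)
  have halt : AlternatingList M₁ p := by
    intro i h
    rw [hpElen] at h
    rw [hpE i (by omega), hpE (i+1) (by omega)]
    by_cases hpar : i % 2 = 0
    · exact iff_of_false (heven i (by omega) hpar)
        (not_not_intro (hM1edge (i+1) (by omega) (by omega)))
    · exact iff_of_true (hM1edge i (by omega) (by omega))
        (heven (i+1) (by omega) (by omega))
  have hhead : p.head? = some v := by
    obtain ⟨m, hm⟩ : ∃ m, N = m + 1 := ⟨N - 1, by omega⟩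
    rw [hp, hm, List.range_succ_eq_map]
    simp [hg0]
  have hlast? : p.getLast? = some (g (N-1)) := by
    obtain ⟨m, hm⟩ : ∃ m, N = m + 1 := ⟨N - 1, by omega⟩
    rw [hp, hm, List.range_succ, List.map_append]
    simp [hm]

  -- the final vertex
  have hfin : (if (N-1) % 2 = 0 then pt M₂ (g (N-1)) else pt M₁ (g (N-1))) = none := by
    have h' : walkF M₁ M₂ v ((N-1)+1) = none := by
      rw [show N - 1 + 1 = N from by omega]; exact hnone
    rw [walkF_succ, hgs (N-1) (by omega)] at h'
    simpa using h'
  by_cases hpar : (N-1) % 2 = 0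
  · rw [if_pos hpar] at hfin
    exact ⟨g (N-1), p, hpath, halt, hhead, hlast?, pt_eq_none_iff.mp hfin⟩
  · rw [if_neg hpar] at hfin
    have hlastM₁ : Unmatched M₁ (g (N-1)) := pt_eq_none_iff.mp hfin
    have h0u : Unmatched M₁ (g 0) := hg0 ▸ hv₁
    obtain ⟨M', hM', hcard⟩ := augment G hM₁ g N (by omega) (by omega)
      hginj hadj hM1edge heven h0u hlastM₁
    exact absurd (hM₁max M' hM') (by omega)
end

section
/- Let M be a maximum matching of a finite bipartite graph Γ = (V⁺, V⁻, E), and let D ⊆ V⁺ be the set of vertices of V⁺ reachable from some M-unmatched vertex of V⁺ by an M-alternating path (in the auxiliary orientation where matched edges are reversed). Then D is independent of the choice of maximum matching M. -/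
/-- A matching in the bipartite graph with parts `α`, `β` and edge relation `E`. -/
def IsBMatching {α β : Type*} (E : α → β → Prop) (M : Finset (α × β)) : Prop :=
  (∀ p ∈ M, E p.1 p.2) ∧ ∀ p ∈ M, ∀ q ∈ M, p ≠ q → p.1 ≠ q.1 ∧ p.2 ≠ q.2

/-- One step in the auxiliary directed graph associated with a matching `M`:
non-matching edges are directed from `V⁺` to `V⁻`, matching edges are reversed. -/
inductive AuxStep {α β : Type*} (E : α → β → Prop) (M : Finset (α × β)) :
    α ⊕ β → α ⊕ β → Prop
  | fwd {a : α} {b : β} : E a b → (a, b) ∉ M → AuxStep E M (Sum.inl a) (Sum.inr b)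
  | bwd {a : α} {b : β} : (a, b) ∈ M → AuxStep E M (Sum.inr b) (Sum.inl a)

/-- The set of `V⁺`-vertices reachable from some `M`-unmatched vertex of `V⁺` by an
`M`-alternating path in the auxiliary graph. -/
def Dset {α β : Type*} (E : α → β → Prop) (M : Finset (α × β)) : Set α :=
  {a | ∃ u : α, (∀ p ∈ M, p.1 ≠ u) ∧
    Relation.ReflTransGen (AuxStep E M) (Sum.inl u) (Sum.inl a)}

section DMProof

open List Relation

variable {α β : Type*} {E : α → β → Prop}

/-- Uniqueness of partners in a matching (left vertex determines right). -/
lemma match_left {K : Finset (α × β)} (hK : IsBMatching E K) {x : α} {b b' : β}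
    (h1 : (x, b) ∈ K) (h2 : (x, b') ∈ K) : b = b' := by
  by_contra hne
  exact (hK.2 _ h1 _ h2 (by simp [hne])).1 rfl

/-- Uniqueness of partners in a matching (right vertex determines left). -/
lemma match_right {K : Finset (α × β)} (hK : IsBMatching E K) {x x' : α} {b : β}
    (h1 : (x, b) ∈ K) (h2 : (x', b) ∈ K) : x = x' := by
  by_contra hne
  exact (hK.2 _ h1 _ h2 (by simp [hne])).2 rfl

/-- Flip step on `V⁺` relative to a matching `K`: a non-`K` edge followed by a `K` edge. -/
def FStep (E : α → β → Prop) (K : Finset (α × β)) (x x' : α) : Prop :=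
  ∃ b, E x b ∧ (x, b) ∉ K ∧ (x', b) ∈ K

/-- Double step on `V⁺`: an `M` edge followed (backwards) by an `N` edge. -/
def MNStep (M N : Finset (α × β)) (x x' : α) : Prop :=
  ∃ b, (x, b) ∈ M ∧ (x', b) ∈ N

/-- Flipping a matching along a simple alternating path: the key surgery lemma. -/
lemma flip_aux [DecidableEq α] [DecidableEq β] {K : Finset (α × β)} (hK : IsBMatching E K) :
    ∀ (L : List α) (x : α) (N : Finset (α × β)) (P : Finset α),
      List.Chain (FStep E K) x L → (x :: L).Nodup → (∀ y ∈ L, y ∉ P) →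
      IsBMatching E N → N.card = K.card → (∀ p ∈ N, p.1 ≠ x) →
      (∀ y, y ∉ P → ∀ b, ((y, b) ∈ N ↔ (y, b) ∈ K)) →
      (∀ b, (∃ y, (y, b) ∈ N) ↔ (∃ y, (y, b) ∈ K)) →
      ∃ N', IsBMatching E N' ∧ N'.card = K.card ∧
        (∀ p ∈ N', p.1 ≠ (x :: L).getLast (List.cons_ne_nil _ _)) ∧
        (∀ b, (∃ y, (y, b) ∈ N') ↔ (∃ y, (y, b) ∈ K)) := by
  intro L
  induction L with
  | nil =>
    intro x N P _ _ _ hN hcard hmiss _ hβ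
    exact ⟨N, hN, hcard, by simpa using hmiss, hβ⟩
  | cons x' L' ih =>
    intro x N P hch hnd hLP hN hcard hmiss hagree hβ
    obtain ⟨hstep, hch'⟩ := List.chain_cons.mp hch
    obtain ⟨b, hEb, hbK, hx'b⟩ := hstep
    have hxnot : x ∉ x' :: L' := (List.nodup_cons.mp hnd).1
    have hnd' : (x' :: L').Nodup := (List.nodup_cons.mp hnd).2
    have hxx' : x ≠ x' := fun h => hxnot (h ▸ List.mem_cons_self)
    have hx'P : x' ∉ P := hLP x' (List.mem_cons_self)
    have hx'bN : (x', b) ∈ N := (hagree x' hx'P b).mpr hx'b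
    have hxbN : (x, b) ∉ N := fun h => hmiss _ h rfl
    set N' := insert (x, b) (N.erase (x', b)) with hN'def
    have hkey : ∀ q ∈ N.erase (x', b), q.1 ≠ x ∧ q.2 ≠ b := by
      intro q hq
      have hqN := Finset.mem_of_mem_erase hq
      refine ⟨hmiss q hqN, fun h2 => ?_⟩
      have : q = (x', b) := by
        have := match_right hN (show (q.1, b) ∈ N by rwa [← h2, Prod.mk.eta]) hx'bN
        rw [← h2, ← this, Prod.mk.eta]
      exact (Finset.mem_erase.mp hq).1 this
    have hN'm : IsBMatching E N' := by
      constructor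
      · intro p hp
        rcases Finset.mem_insert.mp hp with rfl | hp'
        · exact hEb
        · exact hN.1 _ (Finset.mem_of_mem_erase hp')
      · intro p hp q hq hpq
        rcases Finset.mem_insert.mp hp with rfl | hp' <;>
          rcases Finset.mem_insert.mp hq with rfl | hq'
        · exact absurd rfl hpq
        · exact ⟨fun h => (hkey q hq').1 h.symm, fun h => (hkey q hq').2 h.symm⟩
        · exact ⟨(hkey p hp').1, (hkey p hp').2⟩
        · exact hN.2 _ (Finset.mem_of_mem_erase hp') _ (Finset.mem_of_mem_erase hq') hpq
    have hN'card : N'.card = K.card := by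
      have h1 : (x, b) ∉ N.erase (x', b) := fun h => hxbN (Finset.mem_of_mem_erase h)
      have h2 : 0 < N.card := Finset.card_pos.mpr ⟨_, hx'bN⟩
      rw [hN'def, Finset.card_insert_of_notMem h1, Finset.card_erase_of_mem hx'bN]
      omega
    have hN'miss : ∀ p ∈ N', p.1 ≠ x' := by
      intro p hp
      rcases Finset.mem_insert.mp hp with rfl | hp'
      · exact hxx'
      · intro h
        have hpN := Finset.mem_of_mem_erase hp'
        have : p = (x', b) := by
          have hb2 : p.2 = b :=
            match_left hN (show (x', p.2) ∈ N by rwa [← h, Prod.mk.eta]) hx'bN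
          rw [← h, ← hb2, Prod.mk.eta]
        exact (Finset.mem_erase.mp hp').1 this
    have hN'agree : ∀ y, y ∉ insert x' (insert x P) → ∀ c, ((y, c) ∈ N' ↔ (y, c) ∈ K) := by
      intro y hy c
      simp only [Finset.mem_insert, not_or] at hy
      obtain ⟨hy1, hy2, hy3⟩ := hy
      have : ((y, c) ∈ N') ↔ ((y, c) ∈ N) := by
        rw [hN'def, Finset.mem_insert, Finset.mem_erase]
        constructor
        · rintro (h | h)
          · exact absurd (congrArg Prod.fst h) hy2
          · exact h.2
        · intro h
          right
          exact ⟨fun he => hy1 (congrArg Prod.fst he), h⟩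
      rw [this]
      exact hagree y hy3 c
    have hN'β : ∀ c, (∃ y, (y, c) ∈ N') ↔ (∃ y, (y, c) ∈ K) := by
      intro c
      rw [← hβ c]
      constructor
      · rintro ⟨y, hy⟩
        rcases Finset.mem_insert.mp hy with h | h
        · exact ⟨x', by rwa [(Prod.mk.injEq _ _ _ _).mp h |>.2] ⟩
        · exact ⟨y, Finset.mem_of_mem_erase h⟩
      · rintro ⟨y, hy⟩
        by_cases hcb : c = b
        · exact ⟨x, by rw [hcb]; exact Finset.mem_insert_self _ _⟩
        · exact ⟨y, Finset.mem_insert_of_mem (Finset.mem_erase.mpr ⟨by simp [hcb], hy⟩)⟩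
    have hLP' : ∀ y ∈ L', y ∉ insert x' (insert x P) := by
      intro y hy
      simp only [Finset.mem_insert, not_or]
      exact ⟨fun h => (List.nodup_cons.mp hnd').1 (h ▸ hy),
             fun h => hxnot (h ▸ List.mem_cons_of_mem _ hy),
             hLP y (List.mem_cons_of_mem _ hy)⟩
    have := ih x' N' (insert x' (insert x P)) hch' hnd' hLP' hN'm hN'card hN'miss hN'agree hN'β
    rwa [List.getLast_cons_cons]

/-- Extract a suffix chain starting at any member of a chain. -/
lemma chain_suffix {γ : Type*} {r : γ → γ → Prop} :
    ∀ (L : List γ) (x y : γ), List.Chain r x L → y ∈ x :: L →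
      ∃ L', List.Chain r y L' ∧ (y :: L') <:+ (x :: L) := by
  intro L
  induction L with
  | nil =>
    intro x y _ hy
    simp only [List.mem_singleton] at hy
    exact ⟨[], List.Chain.nil, hy ▸ List.suffix_refl _⟩
  | cons z L' ih =>
    intro x y hch hy
    rcases List.mem_cons.mp hy with rfl | hy'
    · exact ⟨z :: L', hch, List.suffix_refl _⟩
    · obtain ⟨L'', h1, h2⟩ := ih z y (List.chain_cons.mp hch).2 hy'
      exact ⟨L'', h1, h2.trans (List.suffix_cons x (z :: L'))⟩

/-- From reflexive-transitive reachability, a duplicate-free chain. -/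
lemma exists_nodup_chain {γ : Type*} {r : γ → γ → Prop} {u a : γ}
    (h : Relation.ReflTransGen r u a) :
    ∃ L, List.Chain r u L ∧ (u :: L).Nodup ∧
      (u :: L).getLast (List.cons_ne_nil _ _) = a := by
  induction h using Relation.ReflTransGen.head_induction_on with
  | refl => exact ⟨[], List.Chain.nil, by simp, rfl⟩
  | head h' h'' ih =>
    rename_i x c
    obtain ⟨L, hch, hnd, hlast⟩ := ih
    by_cases hx : x ∈ c :: L
    · obtain ⟨L', hch', hsuf⟩ := chain_suffix L c x hch hx
      refine ⟨L', hch', hsuf.sublist.nodup hnd, ?_⟩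
      obtain ⟨t, ht⟩ := hsuf
      rw [← hlast, ← List.getLast_congr (by simp) _ ht, List.getLast_append_of_ne_nil (by simp) (List.cons_ne_nil x L')]
    · exact ⟨c :: L, List.Chain.cons h' hch, List.nodup_cons.mpr ⟨hx, hnd⟩,
        by rw [List.getLast_cons_cons]; exact hlast⟩

/-- An alternating path in the auxiliary graph between `V⁺` vertices yields an `FStep` path. -/
lemma aux_to_fstep {M : Finset (α × β)} {a : α} :
    ∀ {s : α ⊕ β}, Relation.ReflTransGen (AuxStep E M) s (Sum.inl a) →
      (∀ x, s = Sum.inl x → Relation.ReflTransGen (FStep E M) x a) ∧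
      (∀ b, s = Sum.inr b → ∀ x, E x b → (x, b) ∉ M →
        Relation.ReflTransGen (FStep E M) x a) := by
  intro s h
  induction h using Relation.ReflTransGen.head_induction_on with
  | refl =>
    refine ⟨fun x hx => ?_, fun b hb => by simp at hb⟩
    rw [Sum.inl.injEq] at hx
    exact hx ▸ Relation.ReflTransGen.refl
  | head h' h'' ih =>
    constructor
    · intro x hx
      subst hx
      cases h' with
      | fwd hE hM => exact ih.2 _ rfl x hE hM
    · intro b hb
      subst hb
      cases h' with
      | bwd hM =>
        intro x hE hxM
        exact Relation.ReflTransGen.head ⟨b, hE, hxM, hM⟩ (ih.1 _ rfl)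

/-- Chains can be upgraded using distinctness of consecutive elements from `Nodup`. -/
lemma chain_ne_imp {γ : Type*} {r s : γ → γ → Prop}
    (hrs : ∀ u v, r u v → u ≠ v → s u v) :
    ∀ (W : List γ) (x : γ), List.Chain r x W → (x :: W).Nodup → List.Chain s x W := by
  intro W
  induction W with
  | nil => intro x _ _; exact List.Chain.nil
  | cons y W' ih =>
    intro x hch hnd
    obtain ⟨h1, h2⟩ := List.chain_cons.mp hch
    have hxy : x ≠ y := fun h => (List.nodup_cons.mp hnd).1 (h ▸ List.mem_cons_self)
    exact List.Chain.cons (hrs _ _ h1 hxy) (ih y h2 (List.nodup_cons.mp hnd).2)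

/-- A reversed `MNStep` chain gives an alternating path in the auxiliary graph of `M`. -/
lemma revchain_to_aux {M N : Finset (α × β)} (hM : IsBMatching E M) (hN : IsBMatching E N) :
    ∀ (W : List α) (x : α), List.Chain (flip (MNStep M N)) x W → (x :: W).Nodup →
      Relation.ReflTransGen (AuxStep E M) (Sum.inl x)
        (Sum.inl ((x :: W).getLast (List.cons_ne_nil _ _))) := by
  intro W
  induction W with
  | nil => intro x _ _; exact Relation.ReflTransGen.refl
  | cons y W' ih =>
    intro x hch hnd
    obtain ⟨hst, hch'⟩ := List.chain_cons.mp hch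
    obtain ⟨c, hycM, hxcN⟩ := hst
    have hxy : x ≠ y := fun h => (List.nodup_cons.mp hnd).1 (h ▸ List.mem_cons_self)
    have hxcM : (x, c) ∉ M := fun h => hxy (match_right hM h hycM)
    have h1 : AuxStep E M (Sum.inl x) (Sum.inr c) := AuxStep.fwd (hN.1 _ hxcN) hxcM
    have h2 : AuxStep E M (Sum.inr c) (Sum.inl y) := AuxStep.bwd hycM
    rw [List.getLast_cons_cons]
    exact Relation.ReflTransGen.head h1 (Relation.ReflTransGen.head h2
      (ih y hch' (List.nodup_cons.mp hnd).2))

/-- Every non-terminal element of a chain has a successor in the chain. -/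
lemma chain_succ {γ : Type*} {r : γ → γ → Prop} :
    ∀ (W : List γ) (x z : γ), List.Chain r x W → z ∈ x :: W →
      z ≠ (x :: W).getLast (List.cons_ne_nil _ _) → ∃ w ∈ W, r z w := by
  intro W
  induction W with
  | nil =>
    intro x z _ hz hne
    simp only [List.mem_singleton] at hz
    exact absurd (by simp [hz]) hne
  | cons y W' ih =>
    intro x z hch hz hne
    rcases List.mem_cons.mp hz with rfl | hz'
    · exact ⟨y, List.mem_cons_self, (List.chain_cons.mp hch).1⟩
    · obtain ⟨w, hw, hr⟩ := ih y z (List.chain_cons.mp hch).2 hz'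
        (by rwa [List.getLast_cons_cons] at hne)
      exact ⟨w, List.mem_cons_of_mem _ hw, hr⟩

/-- Lemma 1: if `a` is reachable by an alternating path from an `M`-unmatched vertex,
then some matching of the same cardinality misses `a`. -/
lemma exists_max_missing [DecidableEq α] [DecidableEq β] {M : Finset (α × β)}
    (hM : IsBMatching E M) {u a : α} (hu : ∀ p ∈ M, p.1 ≠ u)
    (hpath : Relation.ReflTransGen (AuxStep E M) (Sum.inl u) (Sum.inl a)) :
    ∃ N, IsBMatching E N ∧ N.card = M.card ∧ (∀ p ∈ N, p.1 ≠ a) := by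
  have h1 : Relation.ReflTransGen (FStep E M) u a := (aux_to_fstep hpath).1 u rfl
  obtain ⟨L, hch, hnd, hlast⟩ := exists_nodup_chain h1
  have hLP : ∀ y ∈ L, y ∉ ({u} : Finset α) := by
    intro y hy
    simp only [Finset.mem_singleton]
    exact fun h => (List.nodup_cons.mp hnd).1 (h ▸ hy)
  obtain ⟨N, hN, hcard, hmiss, _⟩ :=
    flip_aux hM L u M {u} hch hnd hLP hM rfl hu (fun _ _ _ => Iff.rfl) (fun _ => Iff.rfl)
  exact ⟨N, hN, hcard, hlast ▸ hmiss⟩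

/-- Lemma 2: if a maximum matching `N` misses `a`, then `a ∈ Dset E M` for any matching `M`. -/
lemma mem_Dset_of_missing [Fintype α] [DecidableEq α] [DecidableEq β]
    {M N : Finset (α × β)} (hM : IsBMatching E M) (hN : IsBMatching E N)
    (hNmax : ∀ M', IsBMatching E M' → M'.card ≤ N.card)
    {a : α} (ha : ∀ p ∈ N, p.1 ≠ a) : a ∈ Dset E M := by
  suffices walk : ∀ (n : ℕ) (x : α) (W : List α),
      (x :: W).length + n = Fintype.card α + 1 →
      List.Chain (flip (MNStep M N)) x W → (x :: W).Nodup →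
      (x :: W).getLast (List.cons_ne_nil _ _) = a → a ∈ Dset E M by
    exact walk (Fintype.card α) a [] (by simp only [List.length_cons, List.length_nil]; omega) List.Chain.nil (by simp) rfl
  intro n
  induction n with
  | zero =>
    intro x W hlen _ hnd _
    exfalso
    have := hnd.length_le_card
    omega
  | succ n ih =>
    intro x W hlen hch hnd hlast
    by_cases hxM : ∃ b, (x, b) ∈ M
    · obtain ⟨b, hxb⟩ := hxM
      by_cases hbN : ∃ y, (y, b) ∈ N
      · obtain ⟨y', hy'⟩ := hbN
        have hstep : MNStep M N x y' := ⟨b, hxb, hy'⟩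
        have hy'notin : y' ∉ x :: W := by
          intro hmem
          have hy'a : y' ≠ a := ha _ hy'
          obtain ⟨w, hwW, hrw⟩ := chain_succ W x y' hch hmem (hlast ▸ hy'a)
          obtain ⟨c, hwc, hy'c⟩ := hrw
          have hcb : c = b := match_left hN hy'c hy'
          have hwx : w = x := match_right hM (hcb ▸ hwc) hxb
          exact (List.nodup_cons.mp hnd).1 (hwx ▸ hwW)
        refine ih y' (x :: W) ?_ (List.Chain.cons hstep hch)
          (List.nodup_cons.mpr ⟨hy'notin, hnd⟩) (by rw [List.getLast_cons_cons]; exact hlast)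
        simp only [List.length_cons] at hlen ⊢
        omega
      · exfalso
        push_neg at hbN
        have hch2 : List.Chain (flip (FStep E N)) x W := by
          refine chain_ne_imp ?_ W x hch hnd
          rintro u v ⟨c, hvc, huc⟩ huv
          refine ⟨c, hM.1 _ hvc, fun h => huv (match_right hN huc h), huc⟩
        have hrevlist : (x :: W).reverse = a :: ((x :: W).dropLast).reverse := by
          conv_lhs => rw [← List.dropLast_append_getLast (List.cons_ne_nil x W)]
          rw [List.reverse_append, hlast]
          simp
        set T := ((x :: W).dropLast).reverse with hT
        have hrev : List.Chain' (FStep E N) ((x :: W).reverse) :=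
          List.isChain_reverse.mpr hch2
        have hchT : List.Chain (FStep E N) a T := by
          rw [hrevlist] at hrev
          exact hrev
        have hndT : (a :: T).Nodup := by
          rw [← hrevlist]
          exact List.nodup_reverse.mpr hnd
        have hlastT : (a :: T).getLast (List.cons_ne_nil _ _) = x := by
          have h1 : (a :: T).getLast (List.cons_ne_nil _ _)
              = ((x :: W).reverse).getLast (by simp) := by
            congr 1 <;> rw [hrevlist]
          rw [h1]
          have h2 : (x :: W).reverse = W.reverse ++ [x] := by simp
          rw [List.getLast_congr _ (by simp) h2, List.getLast_append_of_ne_nil (by simp) (by simp)]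
          rfl
        have hTP : ∀ y ∈ T, y ∉ ({a} : Finset α) := by
          intro y hy
          simp only [Finset.mem_singleton]
          exact fun h => (List.nodup_cons.mp hndT).1 (h ▸ hy)
        obtain ⟨N', hN', hcard', hmiss', hβ'⟩ :=
          flip_aux hN T a N {a} hchT hndT hTP hN rfl ha
            (fun _ _ _ => Iff.rfl) (fun _ => Iff.rfl)
        rw [hlastT] at hmiss'
        have hxbN' : (x, b) ∉ N' := fun h => hmiss' _ h rfl
        have hbig : IsBMatching E (insert (x, b) N') := by
          constructor
          · intro p hp
            rcases Finset.mem_insert.mp hp with rfl | hp'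
            · exact hM.1 _ hxb
            · exact hN'.1 _ hp'
          · intro p hp q hq hpq
            have key : ∀ q ∈ N', q.1 ≠ x ∧ q.2 ≠ b := by
              intro q hq'
              refine ⟨hmiss' _ hq', fun h => ?_⟩
              have : ∃ y, (y, b) ∈ N' := ⟨q.1, by rwa [← h, Prod.mk.eta]⟩
              obtain ⟨y, hy⟩ := (hβ' b).mp this
              exact hbN y hy
            rcases Finset.mem_insert.mp hp with rfl | hp' <;>
              rcases Finset.mem_insert.mp hq with rfl | hq'
            · exact absurd rfl hpq
            · exact ⟨fun h => (key q hq').1 h.symm, fun h => (key q hq').2 h.symm⟩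
            · exact ⟨(key p hp').1, (key p hp').2⟩
            · exact hN'.2 _ hp' _ hq' hpq
        have hc : (insert (x, b) N').card = N.card + 1 := by
          rw [Finset.card_insert_of_notMem hxbN', hcard']
        have := hNmax _ hbig
        omega
    · push_neg at hxM
      refine ⟨x, fun p hp h => hxM p.2 ?_, hlast ▸ revchain_to_aux hM hN W x hch hnd⟩
      rwa [← h, Prod.mk.eta]

/-- One inclusion of the main theorem. -/
lemma Dset_subset_Dset {α β : Type*} [Fintype α] [DecidableEq α] [DecidableEq β]
    {E : α → β → Prop} {M₁ M₂ : Finset (α × β)}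
    (hM₁ : IsBMatching E M₁) (hM₁max : ∀ M', IsBMatching E M' → M'.card ≤ M₁.card)
    (hM₂ : IsBMatching E M₂) : Dset E M₁ ⊆ Dset E M₂ := by
  intro a ha
  obtain ⟨u, hu, hpath⟩ := ha
  obtain ⟨N, hN, hcard, hmiss⟩ := exists_max_missing hM₁ hu hpath
  exact mem_Dset_of_missing hM₂ hN (fun M' h => (hM₁max M' h).trans_eq hcard.symm) hmiss

end DMProof

/-- The set of `V⁺`-vertices reachable by alternating paths from unmatched vertices
does not depend on the choice of maximum matching. -/
theorem Dset_independent {α β : Type*} [Fintype α] [Fintype β] (E : α → β → Prop)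
    (M₁ M₂ : Finset (α × β))
    (hM₁ : IsBMatching E M₁) (hM₁max : ∀ M', IsBMatching E M' → M'.card ≤ M₁.card)
    (hM₂ : IsBMatching E M₂) (hM₂max : ∀ M', IsBMatching E M' → M'.card ≤ M₂.card) :
    Dset E M₁ = Dset E M₂ := by
  classical
  exact Set.Subset.antisymm (Dset_subset_Dset hM₁ hM₁max hM₂) (Dset_subset_Dset hM₂ hM₂max hM₁)
end

section
/- Observational equivalence is an equivalence relation: defining x^i ∼ x^j iff rank O(A,C_i) = rank O(A,C_j) = rank O(A, [C_i; C_j]), the relation ∼ on states is reflexive, symmetric, and transitive. -/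
/-- The observability matrix `O(A, C) = [C; CA; …; CA^{n−1}]` of the pair `(A, C)`,
with the rows of `C A^k` stacked for `k = 0, …, n−1`. -/
noncomputable def obsMat {n : ℕ} {m : Type*} (A : Matrix (Fin n) (Fin n) ℝ)
    (C : Matrix m (Fin n) ℝ) : Matrix (Fin n × m) (Fin n) ℝ :=
  Matrix.of fun p j => (C * A ^ (p.1 : ℕ)) p.2 j

lemma obsMat_row_range {n : ℕ} {m₁ m₂ : Type*} (A : Matrix (Fin n) (Fin n) ℝ)
    (B : Matrix m₁ (Fin n) ℝ) (C : Matrix m₂ (Fin n) ℝ) :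
    Set.range (obsMat A (Matrix.fromRows B C)) =
      Set.range (obsMat A B) ∪ Set.range (obsMat A C) := by
  ext v
  constructor
  · rintro ⟨⟨k, i⟩, rfl⟩
    cases i with
    | inl a =>
      left; exact ⟨(k, a), by ext j; simp [obsMat, Matrix.mul_apply]⟩
    | inr a =>
      right; exact ⟨(k, a), by ext j; simp [obsMat, Matrix.mul_apply]⟩
  · rintro (⟨⟨k, a⟩, rfl⟩ | ⟨⟨k, a⟩, rfl⟩)
    · exact ⟨(k, Sum.inl a), by ext j; simp [obsMat, Matrix.mul_apply]⟩
    · exact ⟨(k, Sum.inr a), by ext j; simp [obsMat, Matrix.mul_apply]⟩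

/-- Observational equivalence `x^i ∼ x^j`, defined by
`rank O(A,C_i) = rank O(A,C_j) = rank O(A,[C_i;C_j])`, is an equivalence relation. -/
theorem observational_equivalence {n : ℕ} (A : Matrix (Fin n) (Fin n) ℝ)
    (C : Fin n → Matrix (Fin 1) (Fin n) ℝ) :
    Equivalence (fun i j : Fin n =>
      (obsMat A (C i)).rank = (obsMat A (C j)).rank ∧
      (obsMat A (C j)).rank = (obsMat A (Matrix.fromRows (C i) (C j))).rank) := by
  -- Work with row spaces.
  set S : Fin n → Submodule ℝ (Fin n → ℝ) :=
    fun i => Submodule.span ℝ (Set.range (obsMat A (C i))) with hS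
  have hrank : ∀ i, (obsMat A (C i)).rank = Module.finrank ℝ (S i) := fun i =>
    Matrix.rank_eq_finrank_span_row _
  have hsup : ∀ i j, (obsMat A (Matrix.fromRows (C i) (C j))).rank =
      Module.finrank ℝ (S i ⊔ S j : Submodule ℝ (Fin n → ℝ)) := by
    intro i j
    rw [Matrix.rank_eq_finrank_span_row]
    show Module.finrank ℝ (Submodule.span ℝ (Set.range (obsMat A (Matrix.fromRows (C i) (C j))))) = _
    rw [obsMat_row_range, Submodule.span_union]
  constructor
  · intro i
    refine ⟨rfl, ?_⟩
    rw [hrank, hsup, sup_idem]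
  · rintro i j ⟨h1, h2⟩
    refine ⟨h1.symm, ?_⟩
    rw [hrank, hsup, sup_comm]
    rw [hrank, hsup] at h2
    rw [hrank, hrank] at h1
    omega
  · rintro i j k ⟨h1, h2⟩ ⟨h3, h4⟩
    rw [hrank, hrank] at h1 h3
    rw [hrank, hsup] at h2 h4
    have hij : S i = S j := by
      have hle : S j ≤ S i ⊔ S j := le_sup_right
      have : S j = S i ⊔ S j := Submodule.eq_of_le_of_finrank_eq hle h2
      have hji : S i ≤ S j := this ▸ le_sup_left
      exact Submodule.eq_of_le_of_finrank_eq hji h1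
    have hjk : S j = S k := by
      have hle : S k ≤ S j ⊔ S k := le_sup_right
      have : S k = S j ⊔ S k := Submodule.eq_of_le_of_finrank_eq hle h4
      have hkj : S j ≤ S k := this ▸ le_sup_left
      exact Submodule.eq_of_le_of_finrank_eq hkj h3
    constructor
    · rw [hrank, hrank, hij, hjk]
    · rw [hrank, hsup, hij, hjk, sup_idem]
end
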